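/- arXiv:2003.05296 — 3 statements merged into one kernel-verified Lean document; each statement's English description precedes it below -/
import Mathlib

section
/- Let p = 4k+1 be a prime and R a commutative ring of characteristic 2. For i = 0,1,2 let Q_i = Q_p(a_i,b_i,c_i) and let A_i be p×p circulant matrices over R, and let M be the 3p×6p block matrix with block rows (Q_0 Q_1 Q_2 | A_0 A_1 A_2), (Q_2 Q_0 Q_1 | A_2 A_0 A_1), (Q_1 Q_2 Q_0 | A_1 A_2 A_0). Suppose the code generated by M is self-dual, in the sense that M·M^T = 0 and there exists a 6p×3p matrix N over R with M·N = I_{3p}. Then the matrix Σ_{i=0}^{2} Q_i is invertible (a unit in the ring of p×p matrices over R). -/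
open Matrix
open scoped Classical

/-- The quadratic residue circulant matrix `Q_p(a,b,c)`: the `p × p` matrix over `R`,
indexed by `ZMod p`, whose `(i,j)` entry is `a` if `i = j`, `b` if `j - i` is a
nonzero quadratic residue modulo `p`, and `c` otherwise. -/
noncomputable def Qmat (p : ℕ) {R : Type*} [CommRing R] (a b c : R) :
    Matrix (ZMod p) (ZMod p) R :=
  Matrix.of fun i j => if i = j then a else if IsSquare (j - i) then b else c

/-- The `3×3` block circulant matrix `CIRC(B 0, B 1, B 2)` whose block rows are
`(B 0, B 1, B 2)`, `(B 2, B 0, B 1)`, `(B 1, B 2, B 0)`. -/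
def blockCirc {R n : Type*} (B : ZMod 3 → Matrix n n R) :
    Matrix (ZMod 3 × n) (ZMod 3 × n) R :=
  Matrix.of fun ix jy => B (jy.1 - ix.1) ix.2 jy.2

/-- The `3p × 6p` block matrix with block rows `(Q 0, Q 1, Q 2 | A 0, A 1, A 2)`,
`(Q 2, Q 0, Q 1 | A 2, A 0, A 1)`, `(Q 1, Q 2, Q 0 | A 1, A 2, A 0)`. -/
def Mblk {R n : Type*} (Q A : ZMod 3 → Matrix n n R) :
    Matrix (ZMod 3 × n) ((ZMod 3 × n) ⊕ (ZMod 3 × n)) R :=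
  Matrix.fromCols (blockCirc Q) (blockCirc A)

section Aux

variable {R : Type*} [CommRing R] {p : ℕ}

/-- The horizontal concatenation of 3 identity matrices. -/
noncomputable def umat (p : ℕ) (R : Type*) [CommRing R] :
    Matrix (ZMod p) (ZMod 3 × ZMod p) R :=
  Matrix.of fun x iy => if x = iy.2 then 1 else 0

lemma umat_mul_blockCirc [NeZero p] (B : ZMod 3 → Matrix (ZMod p) (ZMod p) R) :
    umat p R * blockCirc B = (∑ i : ZMod 3, B i) * umat p R := by
  ext x jy
  obtain ⟨j, y⟩ := jy
  simp only [mul_apply, umat, blockCirc, of_apply, Fintype.sum_prod_type, ite_mul, zero_mul,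
    one_mul, mul_ite, mul_one, mul_zero, Finset.sum_apply, Matrix.sum_apply,
    Finset.sum_ite_eq, Finset.sum_ite_eq', Finset.mem_univ, if_true]
  exact Fintype.sum_equiv (Equiv.subLeft j) _ _ (fun i => rfl)

lemma umat_mul_transpose [CharP R 2] [NeZero p] :
    umat p R * (umat p R)ᵀ = 1 := by
  ext x y
  simp only [mul_apply, umat, transpose_apply, of_apply, Fintype.sum_prod_type, ite_mul,
    one_mul, zero_mul, Finset.sum_ite_eq, Finset.mem_univ, if_true]
  have hsum : ∀ r : R, (∑ _i : ZMod 3, r) = r := by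
    intro r
    rw [Finset.sum_const, Finset.card_univ, ZMod.card]
    rw [show (3 : ℕ) = 2 + 1 from rfl, succ_nsmul, CharTwo.two_nsmul, zero_add]
  rw [hsum (if y = x then 1 else 0), Matrix.one_apply]
  by_cases h : x = y
  · subst h; simp
  · rw [if_neg (fun hh : y = x => h hh.symm), if_neg h]

lemma blockCirc_transpose (B : ZMod 3 → Matrix (ZMod p) (ZMod p) R) :
    (blockCirc B)ᵀ = blockCirc (fun d => (B (-d))ᵀ) := by
  ext ix jy
  simp only [transpose_apply, blockCirc, of_apply]
  congr 2
  ring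

end Aux

set_option maxHeartbeats 1000000 in
theorem stmt10 {R : Type*} [CommRing R] [CharP R 2] (p k : ℕ) [Fact (Nat.Prime p)]
    (hpk : p = 4 * k + 1) (a b c : ZMod 3 → R)
    (A : ZMod 3 → Matrix (ZMod p) (ZMod p) R)
    (hA : ∀ i, ∃ v : ZMod p → R, A i = Matrix.circulant v)
    (hself : Mblk (fun i => Qmat p (a i) (b i) (c i)) A *
      (Mblk (fun i => Qmat p (a i) (b i) (c i)) A)ᵀ = 0)
    (hfull : ∃ N : Matrix ((ZMod 3 × ZMod p) ⊕ (ZMod 3 × ZMod p)) (ZMod 3 × ZMod p) R,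
      Mblk (fun i => Qmat p (a i) (b i) (c i)) A * N = 1) :
    IsUnit (∑ i : ZMod 3, Qmat p (a i) (b i) (c i)) := by
  classical
  have hneg1 : IsSquare (-1 : ZMod p) := by
    rw [ZMod.exists_sq_eq_neg_one_iff]
    omega
  have hsq : ∀ x : ZMod p, IsSquare (-x) ↔ IsSquare x := by
    intro x
    constructor
    · intro h
      have := hneg1.mul h
      rwa [neg_one_mul, neg_neg] at this
    · intro h
      have := hneg1.mul h
      rwa [neg_one_mul] at this
  set Q : ZMod 3 → Matrix (ZMod p) (ZMod p) R := fun i => Qmat p (a i) (b i) (c i) with hQ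
  have hQcirc : ∀ i, Q i = Matrix.circulant
      (fun d => if d = 0 then a i else if IsSquare d then b i else c i) := by
    intro i
    ext x y
    simp only [hQ, Qmat, of_apply, circulant_apply]
    by_cases h : x = y
    · simp [h]
    · have hxy : ¬ (x - y = 0) := fun hh => h (sub_eq_zero.mp hh)
      rw [if_neg h, if_neg hxy]
      have hiff : IsSquare (y - x) ↔ IsSquare (x - y) := by
        rw [show y - x = -(x - y) by ring, hsq]
      by_cases hs : IsSquare (x - y)
      · rw [if_pos (hiff.mpr hs), if_pos hs]
      · rw [if_neg (fun hh => hs (hiff.mp hh)), if_neg hs]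
  have hQsymm : ∀ i, (Q i)ᵀ = Q i := by
    intro i
    ext x y
    simp only [transpose_apply, hQ, Qmat, of_apply]
    by_cases h : x = y
    · subst h; simp
    · have h' : ¬ (y = x) := fun hh => h hh.symm
      rw [if_neg h, if_neg h']
      have hiff : IsSquare (y - x) ↔ IsSquare (x - y) := by
        rw [show y - x = -(x - y) by ring, hsq]
      by_cases hs : IsSquare (x - y)
      · rw [if_pos hs, if_pos (hiff.mpr hs)]
      · rw [if_neg hs, if_neg (fun hh => hs (hiff.mp hh))]
  set S : Matrix (ZMod p) (ZMod p) R := ∑ i : ZMod 3, Q i with hS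
  set T : Matrix (ZMod p) (ZMod p) R := ∑ i : ZMod 3, A i with hT
  have sum_circ : ∀ (f : ZMod 3 → ZMod p → R),
      (∑ i : ZMod 3, Matrix.circulant (f i)) =
        Matrix.circulant (fun d => ∑ i : ZMod 3, f i d) := by
    intro f
    ext x y
    simp [Matrix.sum_apply, circulant_apply]
  have hvS : S = Matrix.circulant
      (fun d => ∑ i : ZMod 3, (if d = 0 then a i else if IsSquare d then b i else c i)) := by
    rw [hS, Finset.sum_congr rfl (fun i _ => hQcirc i), sum_circ]
  obtain ⟨vS, hvS⟩ : ∃ v, S = Matrix.circulant v := ⟨_, hvS⟩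
  obtain ⟨vT, hvT⟩ : ∃ v, T = Matrix.circulant v := by
    choose v hv using hA
    exact ⟨_, by rw [hT, Finset.sum_congr rfl (fun i _ => hv i), sum_circ]⟩
  have hSsymm : Sᵀ = S := by
    rw [hS, transpose_sum]
    exact Finset.sum_congr rfl (fun i _ => hQsymm i)
  have comm_ST : S * T = T * S := by
    rw [hvS, hvT]; exact circulant_mul_comm _ _
  have comm_STt : S * Tᵀ = Tᵀ * S := by
    rw [hvS, hvT, transpose_circulant]; exact circulant_mul_comm _ _
  have comm_TTt : T * Tᵀ = Tᵀ * T := by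
    rw [hvT, transpose_circulant]; exact circulant_mul_comm _ _
  -- the projection matrix u
  set u : Matrix (ZMod p) (ZMod 3 × ZMod p) R := umat p R with hu
  have hu1 : u * uᵀ = 1 := umat_mul_transpose
  have hubc : ∀ B : ZMod 3 → Matrix (ZMod p) (ZMod p) R,
      u * blockCirc B = (∑ i : ZMod 3, B i) * u := fun B => umat_mul_blockCirc B
  have key : ∀ (B : ZMod 3 → Matrix (ZMod p) (ZMod p) R)
      (P : Matrix (ZMod 3 × ZMod p) (ZMod 3 × ZMod p) R),
      u * (blockCirc B * P) * uᵀ = (∑ i : ZMod 3, B i) * (u * P * uᵀ) := by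
    intro B P
    rw [← Matrix.mul_assoc, hubc, Matrix.mul_assoc (∑ i : ZMod 3, B i) u P, Matrix.mul_assoc]
  have hproj2 : ∀ C : ZMod 3 → Matrix (ZMod p) (ZMod p) R,
      u * (blockCirc fun d => (C (-d))ᵀ) * uᵀ = (∑ i : ZMod 3, C i)ᵀ := by
    intro C
    rw [hubc, Matrix.mul_assoc, hu1, Matrix.mul_one, transpose_sum]
    exact Fintype.sum_equiv (Equiv.neg (ZMod 3)) _ _ (fun i => rfl)
  -- self-orthogonality gives S * Sᵀ + T * Tᵀ = 0
  have hself' : blockCirc Q * (blockCirc Q)ᵀ + blockCirc A * (blockCirc A)ᵀ = 0 := by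
    have := hself
    rwa [Mblk, transpose_fromCols, fromCols_mul_fromRows] at this
  have hSST : S * Sᵀ + T * Tᵀ = 0 := by
    have e := congrArg (fun Z => u * Z * uᵀ) hself'
    simp only [Matrix.mul_add, Matrix.add_mul, Matrix.mul_zero, Matrix.zero_mul] at e
    rw [blockCirc_transpose Q, blockCirc_transpose A, key, key, hproj2, hproj2,
      ← hS, ← hT] at e
    exact e
  have hSS_eq : S * S = T * Tᵀ := by
    have h1' : S * Sᵀ = -(T * Tᵀ) := eq_neg_of_add_eq_zero_left hSST
    have h2' : -(T * Tᵀ) = T * Tᵀ := by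
      ext x y
      simp [CharTwo.neg_eq]
    rw [hSsymm] at h1'
    rw [h1', h2']
  -- full rank gives S * X + T * Y = 1
  obtain ⟨X, Y, h1⟩ : ∃ X Y : Matrix (ZMod p) (ZMod p) R, S * X + T * Y = 1 := by
    obtain ⟨N, hN⟩ := hfull
    refine ⟨u * N.toRows₁ * uᵀ, u * N.toRows₂ * uᵀ, ?_⟩
    have hN' : blockCirc Q * N.toRows₁ + blockCirc A * N.toRows₂ = 1 := by
      have := hN
      rwa [Mblk, ← fromRows_toRows N, fromCols_mul_fromRows] at this
    have e := congrArg (fun Z => u * Z * uᵀ) hN'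
    simp only [Matrix.mul_add, Matrix.add_mul, Matrix.mul_one, hu1] at e
    calc S * (u * N.toRows₁ * uᵀ) + T * (u * N.toRows₂ * uᵀ)
        = u * (blockCirc Q * N.toRows₁) * uᵀ + u * (blockCirc A * N.toRows₂) * uᵀ := by
          rw [← Matrix.mul_assoc u (blockCirc Q) N.toRows₁, hubc,
            ← Matrix.mul_assoc u (blockCirc A) N.toRows₂, hubc, hS, hT]
          simp only [Matrix.mul_assoc]
      _ = 1 := e
  -- the final algebra
  have hSW : S * (Tᵀ * X + S * Y) = Tᵀ := by
    calc S * (Tᵀ * X + S * Y) = S * Tᵀ * X + S * S * Y := by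
          rw [Matrix.mul_add, Matrix.mul_assoc, Matrix.mul_assoc]
      _ = Tᵀ * S * X + Tᵀ * T * Y := by rw [comm_STt, hSS_eq, comm_TTt]
      _ = Tᵀ * (S * X + T * Y) := by
          rw [Matrix.mul_add, Matrix.mul_assoc, Matrix.mul_assoc]
      _ = Tᵀ := by rw [h1, Matrix.mul_one]
  have hTW : T * (Tᵀ * X + S * Y) = S := by
    calc T * (Tᵀ * X + S * Y) = T * Tᵀ * X + T * S * Y := by
          rw [Matrix.mul_add, Matrix.mul_assoc, Matrix.mul_assoc]
      _ = S * S * X + S * T * Y := by rw [← hSS_eq, ← comm_ST]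
      _ = S * (S * X + T * Y) := by
          rw [Matrix.mul_add, Matrix.mul_assoc, Matrix.mul_assoc]
      _ = S := by rw [h1, Matrix.mul_one]
  have hTright : T * ((Tᵀ * X + S * Y) * X + Y) = 1 := by
    rw [Matrix.mul_add, ← Matrix.mul_assoc, hTW, h1]
  have hTunit : IsUnit T := by
    rw [Matrix.isUnit_iff_isUnit_det]
    exact Matrix.isUnit_det_of_right_inverse hTright
  have hTtdet : IsUnit (Tᵀ).det := by
    rw [Matrix.det_transpose]
    exact (Matrix.isUnit_iff_isUnit_det T).mp hTunit
  have hTtinv : Tᵀ * (Tᵀ)⁻¹ = 1 := Matrix.mul_nonsing_inv _ hTtdet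
  have hSright : S * ((Tᵀ * X + S * Y) * (Tᵀ)⁻¹) = 1 := by
    rw [← Matrix.mul_assoc, hSW, hTtinv]
  rw [Matrix.isUnit_iff_isUnit_det]
  exact Matrix.isUnit_det_of_right_inverse hSright
end

section
/- Let p = 4k+1 be a prime and R a commutative ring of characteristic 2. For i = 0,1,2 let a_i, b_i, c_i ∈ R and set Q_i = Q_p(a_i,b_i,c_i). Then Σ_{i=0}^{2} Q_i Q_i^T = Q_p( Σ_{i=0}^{2} a_i^2 , Σ_{i=0}^{2} (b_i^2 + k(b_i^2 + c_i^2)) , Σ_{i=0}^{2} (c_i^2 + k(b_i^2 + c_i^2)) ). -/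
open Matrix
open scoped Classical

section Aux

set_option linter.unusedSectionVars false

variable {R : Type*} [CommRing R] [CharP R 2]

lemma Qmat_add (p : ℕ) (a b c a' b' c' : R) :
    Qmat p a b c + Qmat p a' b' c' = Qmat p (a + a') (b + b') (c + c') := by
  ext i j
  simp only [Qmat, Matrix.add_apply, Matrix.of_apply]
  split_ifs <;> ring

lemma isSquare_mul_inv_two_iff {p : ℕ} [Fact (Nat.Prime p)] (hp2 : (2 : ZMod p) ≠ 0)
    {d : ZMod p} (hd : d ≠ 0) :
    IsSquare (d * (2 : ZMod p)⁻¹) ↔ (IsSquare d ↔ IsSquare (2 : ZMod p)) := by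
  have h2inv : ((2 : ZMod p)⁻¹ : ZMod p) ≠ 0 := inv_ne_zero hp2
  have hm : d * (2 : ZMod p)⁻¹ ≠ 0 := mul_ne_zero hd h2inv
  have hmul : quadraticChar (ZMod p) (d * (2 : ZMod p)⁻¹) * quadraticChar (ZMod p) (2 : ZMod p)
      = quadraticChar (ZMod p) d := by
    rw [← _root_.map_mul]
    congr 1
    field_simp
  rw [← quadraticChar_one_iff_isSquare hm, ← quadraticChar_one_iff_isSquare hd,
    ← quadraticChar_one_iff_isSquare hp2]
  rcases quadraticChar_dichotomy (F := ZMod p) hm with h1 | h1 <;>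
    rcases quadraticChar_dichotomy (F := ZMod p) hd with h2 | h2 <;>
    rcases quadraticChar_dichotomy (F := ZMod p) hp2 with h3 | h3 <;>
    rw [h1, h2, h3] at hmul ⊢ <;> norm_num at hmul <;> norm_num

lemma Qmat_mul_transpose (p k : ℕ) [Fact (Nat.Prime p)] (hpk : p = 4 * k + 1)
    (a b c : R) :
    Qmat p a b c * (Qmat p a b c)ᵀ =
      Qmat p (a ^ 2) (b ^ 2 + (k : R) * (b ^ 2 + c ^ 2))
        (c ^ 2 + (k : R) * (b ^ 2 + c ^ 2)) := by
  have hp : Nat.Prime p := Fact.out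
  have hp2' : p ≠ 2 := by omega
  have h2R : (2 : R) = 0 := by
    have := CharP.cast_eq_zero R 2
    exact_mod_cast this
  have hp2 : (2 : ZMod p) ≠ 0 := by
    have h := ZMod.natCast_eq_zero_iff 2 p
    intro hcon
    have : ((2 : ℕ) : ZMod p) = 0 := by exact_mod_cast hcon
    have hdvd : p ∣ 2 := h.mp this
    have h2le := Nat.le_of_dvd (by norm_num) hdvd
    have hge := hp.two_le
    omega
  -- -1 is a square
  have hneg1 : IsSquare (-1 : ZMod p) := by
    rw [ZMod.exists_sq_eq_neg_one_iff]
    omega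
  have hnegsq : ∀ x : ZMod p, IsSquare (-x) ↔ IsSquare x := by
    intro x
    constructor
    · intro h
      simpa using hneg1.mul h
    · intro h
      simpa using hneg1.mul h
  set F : ZMod p → R := fun x => if x = 0 then a else if IsSquare x then b else c with hF
  have hFneg : ∀ x : ZMod p, F (-x) = F x := by
    intro x
    simp only [hF, neg_eq_zero, hnegsq]
  ext i j
  set d : ZMod p := j - i with hd
  set m : ZMod p := d * (2 : ZMod p)⁻¹ with hm
  clear_value d m
  have h2m : m + m = d := by
    rw [hm]
    field_simp
    ring
  have hmiff : d ≠ 0 → (IsSquare m ↔ (IsSquare d ↔ IsSquare (2 : ZMod p))) := by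
    intro hd0
    rw [hm]
    exact isSquare_mul_inv_two_iff hp2 hd0
  have entryQ : ∀ i' l : ZMod p, Qmat p a b c i' l = F (l - i') := by
    intro i' l
    simp only [Qmat, Matrix.of_apply, hF, sub_eq_zero]
    by_cases h : i' = l <;> simp [h, eq_comm]
  -- compute the product entry
  have hL : (Qmat p a b c * (Qmat p a b c)ᵀ) i j = ∑ x : ZMod p, F x * F (x - d) := by
    rw [Matrix.mul_apply]
    simp only [Matrix.transpose_apply, entryQ]
    refine Fintype.sum_equiv (Equiv.subRight i) _ _ (fun l => ?_)
    simp only [Equiv.subRight_apply]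
    rw [show l - j = (l - i) - d by rw [hd]; ring]
  -- involution: the sum collapses to the term at m
  have hsum : ∑ x : ZMod p, F x * F (x - d) = F m * F (m - d) := by
    rw [← Finset.add_sum_erase Finset.univ _ (Finset.mem_univ m)]
    have h0 : ∑ x ∈ Finset.univ.erase m, F x * F (x - d) = 0 := by
      refine Finset.sum_involution (fun x _ => d - x) ?_ ?_ ?_ ?_
      · intro x hx
        have h1 : F (d - x) = F (x - d) := by
          rw [show d - x = -(x - d) by ring, hFneg]
        have h2 : F (d - x - d) = F x := by
          rw [show d - x - d = -x by ring, hFneg]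
        rw [h1, h2]
        calc F x * F (x - d) + F (x - d) * F x = 2 * (F x * F (x - d)) := by ring
          _ = 0 := by rw [h2R, zero_mul]
      · intro x hx _
        intro hcon
        have hxm : x ≠ m := Finset.ne_of_mem_erase hx
        apply hxm
        have hcon' : d - x = x := hcon
        have hx2 : x + x = d := by linear_combination -hcon'
        have h2' : x + x = m + m := by rw [hx2, h2m]
        have h2'' : (2 : ZMod p) * x = (2 : ZMod p) * m := by
          rw [two_mul, two_mul, h2']
        exact mul_left_cancel₀ hp2 h2''
      · intro x hx
        refine Finset.mem_erase.2 ⟨?_, Finset.mem_univ _⟩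
        intro hcon
        have hxm : x ≠ m := Finset.ne_of_mem_erase hx
        apply hxm
        have hx' : x = d - m := by rw [← hcon]; ring
        rw [hx', ← h2m]; ring
      · intro x hx
        ring
    rw [h0, add_zero]
  have hmd : F (m - d) = F m := by
    rw [show m - d = -m by rw [← h2m]; ring, hFneg]
  rw [hL, hsum, hmd]
  by_cases hij : i = j
  · have hd0 : d = 0 := by rw [hd, hij, sub_self]
    have hm0 : m = 0 := by
      have := h2m
      rw [hd0] at this
      have h2'' : (2 : ZMod p) * m = (2 : ZMod p) * 0 := by
        rw [two_mul, this, mul_zero]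
      exact mul_left_cancel₀ hp2 h2''
    simp only [Qmat, Matrix.of_apply, if_pos hij, hF, hm0, if_pos rfl]
    ring
  · have hd0 : d ≠ 0 := by rw [hd]; exact sub_ne_zero.2 (Ne.symm hij)
    have hm0 : m ≠ 0 := by
      intro h
      apply hd0
      rw [← h2m, h, add_zero]
    have hFm : F m = if IsSquare m then b else c := by simp [hF, hm0]
    have hsq2 : IsSquare (2 : ZMod p) ↔ p % 8 = 1 ∨ p % 8 = 7 :=
      ZMod.exists_sq_eq_two_iff hp2'
    have hmiff' := hmiff hd0
    simp only [Qmat, Matrix.of_apply, if_neg hij, ← hd, hFm]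
    rcases Nat.even_or_odd k with hk | hk
    · -- k even : 2 is a square mod p, (k : R) = 0
      obtain ⟨t, ht⟩ := hk
      have hkR : (k : R) = 0 := by
        rw [ht]; push_cast; linear_combination (t : R) * h2R
      have hsq2' : IsSquare (2 : ZMod p) := by
        rw [hsq2]; left; omega
      by_cases hsd : IsSquare d
      · have hsm : IsSquare m := by rw [hmiff']; tauto
        rw [if_pos hsd, if_pos hsm, hkR]; ring
      · have hsm : ¬ IsSquare m := by rw [hmiff']; tauto
        rw [if_neg hsd, if_neg hsm, hkR]; ring
    · -- k odd : 2 is not a square mod p, (k : R) = 1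
      obtain ⟨t, ht⟩ := hk
      have hkR : (k : R) = 1 := by
        rw [ht]; push_cast; linear_combination (t : R) * h2R
      have hsq2' : ¬ IsSquare (2 : ZMod p) := by
        rw [hsq2]; omega
      by_cases hsd : IsSquare d
      · have hsm : ¬ IsSquare m := by rw [hmiff']; tauto
        rw [if_pos hsd, if_neg hsm, hkR]
        linear_combination (-(b ^ 2)) * h2R
      · have hsm : IsSquare m := by rw [hmiff']; tauto
        rw [if_neg hsd, if_pos hsm, hkR]
        linear_combination (-(c ^ 2)) * h2R

end Aux

theorem stmt16 {R : Type*} [CommRing R] [CharP R 2] (p k : ℕ) [Fact (Nat.Prime p)]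
    (hpk : p = 4 * k + 1) (a b c : ZMod 3 → R) :
    ∑ i : ZMod 3, Qmat p (a i) (b i) (c i) * (Qmat p (a i) (b i) (c i))ᵀ =
      Qmat p (∑ i : ZMod 3, (a i) ^ 2)
        (∑ i : ZMod 3, ((b i) ^ 2 + (k : R) * ((b i) ^ 2 + (c i) ^ 2)))
        (∑ i : ZMod 3, ((c i) ^ 2 + (k : R) * ((b i) ^ 2 + (c i) ^ 2))) := by
  have key := fun i : ZMod 3 => Qmat_mul_transpose p k hpk (a i) (b i) (c i)
  have h3 : ∀ (f : ZMod 3 → Matrix (ZMod p) (ZMod p) R),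
      ∑ i : ZMod 3, f i = f 0 + f 1 + f 2 := fun f => by
    show ∑ i : Fin 3, f i = f 0 + f 1 + f 2
    exact Fin.sum_univ_three (f := f)
  have h3' : ∀ (f : ZMod 3 → R), ∑ i : ZMod 3, f i = f 0 + f 1 + f 2 := fun f => by
    show ∑ i : Fin 3, f i = f 0 + f 1 + f 2
    exact Fin.sum_univ_three (f := f)
  rw [h3, h3', h3', h3']
  rw [key 0, key 1, key 2, Qmat_add, Qmat_add]
end

section
/- Let p = 4k+3 be a prime and R a commutative ring of characteristic 2. For i = 0,1,2 let a_i, b_i, c_i ∈ R and set Q_i = Q_p(a_i,b_i,c_i). Then Σ_{i=0}^{2} Q_i Q_i^T = Q_p( Σ_{i=0}^{2} (a_i^2 + b_i^2 + c_i^2) , Σ_{i=0}^{2} (a_i b_i + a_i c_i + b_i c_i + k(b_i^2 + c_i^2)) , Σ_{i=0}^{2} (a_i b_i + a_i c_i + b_i c_i + k(b_i^2 + c_i^2)) ). -/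
open Matrix
open scoped Classical

section NT
variable (p k : ℕ) [Fact (Nat.Prime p)]

lemma hFaux (hpk : p = 4 * k + 3) : ringChar (ZMod p) ≠ 2 := by
  rw [ZMod.ringChar_zmod_n]; omega

lemma chi_neg_one (hpk : p = 4 * k + 3) : quadraticChar (ZMod p) (-1) = -1 := by
  rw [quadraticChar_neg_one_iff_not_isSquare, ZMod.exists_sq_eq_neg_one_iff]
  simp [hpk, Nat.add_mul_mod_self_left]

lemma sumA (hpk : p = 4 * k + 3) {d : ZMod p} (hd : d ≠ 0) :
    ∑ t : ZMod p, quadraticChar (ZMod p) t * quadraticChar (ZMod p) (t - d) = -1 := by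
  have hF := hFaux p k hpk
  have hm1 := chi_neg_one p k hpk
  set χ := quadraticChar (ZMod p) with hχ
  have hJ : jacobiSum χ χ = 1 := by
    have h := jacobiSum_nontrivial_inv (quadraticChar_ne_one hF)
    rwa [(quadraticChar_isQuadratic (ZMod p)).inv, ← hχ, hm1, neg_neg] at h
  have h1 : ∑ t : ZMod p, χ t * χ (t - d)
      = ∑ x : ZMod p, χ (d * x) * χ (d * x - d) :=
    (Fintype.sum_equiv (Equiv.mulLeft₀ d hd) (fun x => χ (d * x) * χ (d * x - d)) (fun t => χ t * χ (t - d)) (fun x => rfl)).symm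
  have key : ∀ x : ZMod p, χ (d * x) * χ (d * x - d)
      = χ d ^ 2 * (χ (-1) * (χ x * χ (1 - x))) := by
    intro x
    have e1 : d * x - d = d * (x - 1) := by ring
    have e2 : (x - 1 : ZMod p) = -1 * (1 - x) := by ring
    rw [_root_.map_mul, e1, _root_.map_mul, e2, _root_.map_mul]
    ring
  rw [h1]
  simp only [key]
  rw [← Finset.mul_sum, ← Finset.mul_sum]
  have : ∑ x : ZMod p, χ x * χ (1 - x) = jacobiSum χ χ := rfl
  rw [this, hJ, quadraticChar_sq_one hd, hm1]
  ring
end NT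

section NT2
variable (p k : ℕ) [Fact (Nat.Prime p)]

lemma chi_neg (hpk : p = 4 * k + 3) (d : ZMod p) :
    quadraticChar (ZMod p) (-d) = - quadraticChar (ZMod p) d := by
  rw [show (-d : ZMod p) = -1 * d by ring, _root_.map_mul, chi_neg_one p k hpk]
  ring

lemma indic_sq (hpk : p = 4 * k + 3) {t : ZMod p} (ht : t ≠ 0) :
    (1 + quadraticChar (ZMod p) t) = if IsSquare t then 2 else 0 := by
  by_cases h : IsSquare t
  · rw [if_pos h, (quadraticChar_one_iff_isSquare ht).mpr h]; ring
  · rw [if_neg h, quadraticChar_neg_one_iff_not_isSquare.mpr h]; ring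

lemma indic_ns (hpk : p = 4 * k + 3) {t : ZMod p} (ht : t ≠ 0) :
    (1 - quadraticChar (ZMod p) t) = if IsSquare t then 0 else 2 := by
  by_cases h : IsSquare t
  · rw [if_pos h, (quadraticChar_one_iff_isSquare ht).mpr h]; ring
  · rw [if_neg h, quadraticChar_neg_one_iff_not_isSquare.mpr h]; ring

variable (hpk : p = 4 * k + 3) {d : ZMod p} (hd : d ≠ 0)
include hpk hd

lemma card_s : (Finset.univ \ {0, d} : Finset (ZMod p)).card = 4 * k + 1 := by
  rw [Finset.card_sdiff_of_subset (Finset.subset_univ _), Finset.card_univ, ZMod.card,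
    Finset.card_pair hd.symm, hpk]
  omega

lemma sum_s_chi :
    ∑ t ∈ (Finset.univ \ {0, d} : Finset (ZMod p)), quadraticChar (ZMod p) t
      = - quadraticChar (ZMod p) d := by
  have h0 : ∑ t : ZMod p, quadraticChar (ZMod p) t = 0 :=
    quadraticChar_sum_zero (hFaux p k hpk)
  have h := Finset.sum_sdiff (f := fun t => quadraticChar (ZMod p) t)
    (Finset.subset_univ ({0, d} : Finset (ZMod p)))
  rw [h0, Finset.sum_pair hd.symm, quadraticChar_zero, zero_add] at h
  linarith

lemma sum_s_chi' :
    ∑ t ∈ (Finset.univ \ {0, d} : Finset (ZMod p)), quadraticChar (ZMod p) (t - d)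
      = quadraticChar (ZMod p) d := by
  have h0 : ∑ t : ZMod p, quadraticChar (ZMod p) (t - d) = 0 := by
    rw [Fintype.sum_equiv (Equiv.subRight d) (fun t => quadraticChar (ZMod p) (t - d))
      (fun t => quadraticChar (ZMod p) t) (fun t => rfl)]
    exact quadraticChar_sum_zero (hFaux p k hpk)
  have h := Finset.sum_sdiff (f := fun t => quadraticChar (ZMod p) (t - d))
    (Finset.subset_univ ({0, d} : Finset (ZMod p)))
  rw [h0, Finset.sum_pair hd.symm, zero_sub, sub_self, quadraticChar_zero, add_zero,
    chi_neg p k hpk] at h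
  linarith

lemma sum_s_cross :
    ∑ t ∈ (Finset.univ \ {0, d} : Finset (ZMod p)),
      quadraticChar (ZMod p) t * quadraticChar (ZMod p) (t - d) = -1 := by
  have h0 := sumA p k hpk hd
  have h := Finset.sum_sdiff (f := fun t => quadraticChar (ZMod p) t * quadraticChar (ZMod p) (t - d))
    (Finset.subset_univ ({0, d} : Finset (ZMod p)))
  simp only [h0, Finset.sum_pair hd.symm, sub_self, quadraticChar_zero, zero_mul, mul_zero,
    add_zero, zero_add] at h
  linarith

lemma card_N1 :
    (((Finset.univ \ {0, d} : Finset (ZMod p)).filter (fun t => IsSquare (t - d))).filter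
      (fun t => IsSquare t)).card = k := by
  set s := (Finset.univ \ {0, d} : Finset (ZMod p)) with hs
  have key : ∀ t ∈ s, (1 + quadraticChar (ZMod p) t) * (1 + quadraticChar (ZMod p) (t - d))
      = if IsSquare (t - d) ∧ IsSquare t then 4 else 0 := by
    intro t hts
    simp only [hs, Finset.mem_sdiff, Finset.mem_insert, Finset.mem_singleton] at hts
    have ht0 : t ≠ 0 := fun h => hts.2 (Or.inl h)
    have htd : t - d ≠ 0 := fun h => hts.2 (Or.inr (by rwa [sub_eq_zero] at h))
    rw [indic_sq p k hpk ht0, indic_sq p k hpk htd]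
    by_cases h1 : IsSquare t <;> by_cases h2 : IsSquare (t - d) <;>
      simp [h1, h2]
  have hsum : ∑ t ∈ s, (1 + quadraticChar (ZMod p) t) * (1 + quadraticChar (ZMod p) (t - d))
      = 4 * k := by
    have expand : ∀ t : ZMod p, (1 + quadraticChar (ZMod p) t) * (1 + quadraticChar (ZMod p) (t - d))
        = 1 + quadraticChar (ZMod p) t + quadraticChar (ZMod p) (t - d)
          + quadraticChar (ZMod p) t * quadraticChar (ZMod p) (t - d) := fun t => by ring
    simp only [expand]
    rw [Finset.sum_add_distrib, Finset.sum_add_distrib, Finset.sum_add_distrib,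
      Finset.sum_const, sum_s_chi p k hpk hd, sum_s_chi' p k hpk hd, sum_s_cross p k hpk hd,
      card_s p k hpk hd]
    push_cast
    ring
  rw [Finset.sum_congr rfl key] at hsum
  rw [← Finset.sum_filter, Finset.sum_const, nsmul_eq_mul] at hsum
  rw [Finset.filter_filter]
  omega

lemma card_N4 :
    (((Finset.univ \ {0, d} : Finset (ZMod p)).filter (fun t => ¬ IsSquare (t - d))).filter
      (fun t => ¬ IsSquare t)).card = k := by
  set s := (Finset.univ \ {0, d} : Finset (ZMod p)) with hs
  have key : ∀ t ∈ s, (1 - quadraticChar (ZMod p) t) * (1 - quadraticChar (ZMod p) (t - d))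
      = if ¬ IsSquare (t - d) ∧ ¬ IsSquare t then 4 else 0 := by
    intro t hts
    simp only [hs, Finset.mem_sdiff, Finset.mem_insert, Finset.mem_singleton] at hts
    have ht0 : t ≠ 0 := fun h => hts.2 (Or.inl h)
    have htd : t - d ≠ 0 := fun h => hts.2 (Or.inr (by rwa [sub_eq_zero] at h))
    rw [indic_ns p k hpk ht0, indic_ns p k hpk htd]
    by_cases h1 : IsSquare t <;> by_cases h2 : IsSquare (t - d) <;>
      simp [h1, h2]
  have hsum : ∑ t ∈ s, (1 - quadraticChar (ZMod p) t) * (1 - quadraticChar (ZMod p) (t - d))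
      = 4 * k := by
    have expand : ∀ t : ZMod p, (1 - quadraticChar (ZMod p) t) * (1 - quadraticChar (ZMod p) (t - d))
        = 1 - quadraticChar (ZMod p) t - quadraticChar (ZMod p) (t - d)
          + quadraticChar (ZMod p) t * quadraticChar (ZMod p) (t - d) := fun t => by ring
    simp only [expand]
    rw [Finset.sum_add_distrib, Finset.sum_sub_distrib, Finset.sum_sub_distrib,
      Finset.sum_const, sum_s_chi p k hpk hd, sum_s_chi' p k hpk hd, sum_s_cross p k hpk hd,
      card_s p k hpk hd]
    push_cast
    ring
  rw [Finset.sum_congr rfl key] at hsum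
  rw [← Finset.sum_filter, Finset.sum_const, nsmul_eq_mul] at hsum
  rw [Finset.filter_filter]
  omega

lemma card_N23 :
    (((Finset.univ \ {0, d} : Finset (ZMod p)).filter (fun t => ¬ IsSquare (t - d))).filter
      (fun t => IsSquare t)).card
    + (((Finset.univ \ {0, d} : Finset (ZMod p)).filter (fun t => IsSquare (t - d))).filter
      (fun t => ¬ IsSquare t)).card = 2 * k + 1 := by
  set s := (Finset.univ \ {0, d} : Finset (ZMod p)) with hs
  have h1 := Finset.card_filter_add_card_filter_not
    (s := s.filter (fun t => IsSquare (t - d))) (p := fun t => IsSquare t)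
  have h2 := Finset.card_filter_add_card_filter_not
    (s := s.filter (fun t => ¬ IsSquare (t - d))) (p := fun t => IsSquare t)
  have h3 := Finset.card_filter_add_card_filter_not
    (s := s) (p := fun t => IsSquare (t - d))
  have h4 := card_N1 p k hpk hd
  have h5 := card_N4 p k hpk hd
  have h6 := card_s p k hpk hd
  rw [← hs] at h4 h5 h6
  omega

omit hd

lemma card_sq0 :
    ((Finset.univ \ {0} : Finset (ZMod p)).filter (fun t => IsSquare t)).card = 2 * k + 1 := by
  set s := (Finset.univ \ {0} : Finset (ZMod p)) with hs
  have hcard : s.card = 4 * k + 2 := by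
    rw [hs, Finset.card_sdiff_of_subset (Finset.subset_univ _), Finset.card_univ, ZMod.card,
      Finset.card_singleton, hpk]
    omega
  have hchi : ∑ t ∈ s, quadraticChar (ZMod p) t = 0 := by
    have h0 : ∑ t : ZMod p, quadraticChar (ZMod p) t = 0 :=
      quadraticChar_sum_zero (hFaux p k hpk)
    have h := Finset.sum_sdiff (f := fun t => quadraticChar (ZMod p) t)
      (Finset.subset_univ ({0} : Finset (ZMod p)))
    simp only [h0, Finset.sum_singleton, quadraticChar_zero, add_zero] at h
    rw [← hs] at h
    exact h
  have key : ∀ t ∈ s, (1 + quadraticChar (ZMod p) t) = if IsSquare t then 2 else 0 := by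
    intro t hts
    simp only [hs, Finset.mem_sdiff, Finset.mem_singleton] at hts
    exact indic_sq p k hpk hts.2
  have hsum : ∑ t ∈ s, (1 + quadraticChar (ZMod p) t) = 4 * k + 2 := by
    rw [Finset.sum_add_distrib, Finset.sum_const, hchi, hcard]
    push_cast
    ring
  rw [Finset.sum_congr rfl key, ← Finset.sum_filter, Finset.sum_const, nsmul_eq_mul] at hsum
  omega

lemma card_ns0 :
    ((Finset.univ \ {0} : Finset (ZMod p)).filter (fun t => ¬ IsSquare t)).card = 2 * k + 1 := by
  have h1 := Finset.card_filter_add_card_filter_not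
    (s := (Finset.univ \ {0} : Finset (ZMod p))) (p := fun t => IsSquare t)
  have h2 := card_sq0 p k hpk
  have hcard : (Finset.univ \ {0} : Finset (ZMod p)).card = 4 * k + 2 := by
    rw [Finset.card_sdiff_of_subset (Finset.subset_univ _), Finset.card_univ, ZMod.card,
      Finset.card_singleton, hpk]
    omega
  omega

lemma sq_neg_iff (hd : d ≠ 0) : IsSquare (-d) ↔ ¬ IsSquare d := by
  have hnd : (-d : ZMod p) ≠ 0 := neg_ne_zero.mpr hd
  constructor
  · intro h hsq
    have h1 := (quadraticChar_one_iff_isSquare hnd).mpr h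
    have h2 := (quadraticChar_one_iff_isSquare hd).mpr hsq
    rw [chi_neg p k hpk, h2] at h1
    norm_num at h1
  · intro h
    by_contra hns
    have h1 := quadraticChar_neg_one_iff_not_isSquare.mpr hns
    have h2 := quadraticChar_neg_one_iff_not_isSquare.mpr h
    rw [chi_neg p k hpk, h2] at h1
    norm_num at h1

end NT2

section Mat
variable {R : Type*} [CommRing R] [CharP R 2] (p k : ℕ) [Fact (Nat.Prime p)]

lemma entry_eq (a b c : R) (i j : ZMod p) :
    (Qmat p a b c * (Qmat p a b c)ᵀ) i j
      = ∑ t : ZMod p,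
          ((if t = 0 then a else if IsSquare t then b else c)
            * (if t - (j - i) = 0 then a else if IsSquare (t - (j - i)) then b else c)) := by
  rw [Matrix.mul_apply]
  rw [← Fintype.sum_equiv (Equiv.addRight i)
    (fun t => ((if t = 0 then a else if IsSquare t then b else c)
      * (if t - (j - i) = 0 then a else if IsSquare (t - (j - i)) then b else c)))
    (fun m => Qmat p a b c i m * (Qmat p a b c)ᵀ m j) ?_]
  intro t
  simp only [Equiv.coe_addRight, Matrix.transpose_apply, Qmat, Matrix.of_apply]
  have e1 : (i = t + i) ↔ (t = 0) := by
    constructor <;> intro h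
    · have := h.symm; rwa [add_eq_right] at this
    · simp [h]
  have e2 : t + i - i = t := by ring
  have e3 : (j = t + i) ↔ (t - (j - i) = 0) := by
    rw [sub_eq_zero]
    constructor <;> intro h
    · rw [h]; ring
    · rw [h]; ring
  have e4 : t + i - j = t - (j - i) := by ring
  rw [e2, e4]
  simp only [e1, e3]
  congr

lemma two_eq_zero : (2 : R) = 0 := by
  have := CharP.cast_eq_zero R 2
  simpa using this

lemma Qmul (hpk : p = 4 * k + 3) (a b c : R) :
    Qmat p a b c * (Qmat p a b c)ᵀ =
      Qmat p (a ^ 2 + b ^ 2 + c ^ 2)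
        (a * b + a * c + b * c + (k : R) * (b ^ 2 + c ^ 2))
        (a * b + a * c + b * c + (k : R) * (b ^ 2 + c ^ 2)) := by
  have h2 : (2 : R) = 0 := two_eq_zero
  ext i j
  rw [entry_eq]
  by_cases hij : i = j
  · -- diagonal
    subst hij
    simp only [sub_self, sub_zero]
    rw [show (Qmat p (a ^ 2 + b ^ 2 + c ^ 2)
        (a * b + a * c + b * c + (k : R) * (b ^ 2 + c ^ 2))
        (a * b + a * c + b * c + (k : R) * (b ^ 2 + c ^ 2))) i i
      = a ^ 2 + b ^ 2 + c ^ 2 from if_pos rfl]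
    have hsplit := Finset.sum_sdiff (f := fun t : ZMod p =>
        ((if t = 0 then a else if IsSquare t then b else c)
          * (if t = 0 then a else if IsSquare t then b else c)))
      (Finset.subset_univ ({0} : Finset (ZMod p)))
    rw [← hsplit, Finset.sum_singleton, if_pos rfl]
    have hrest : ∀ t ∈ (Finset.univ \ {0} : Finset (ZMod p)),
        ((if t = 0 then a else if IsSquare t then b else c)
          * (if t = 0 then a else if IsSquare t then b else c))
        = if IsSquare t then b * b else c * c := by
      intro t ht
      simp only [Finset.mem_sdiff, Finset.mem_singleton] at ht
      rw [if_neg ht.2]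
      by_cases h : IsSquare t <;> simp [h]
    rw [Finset.sum_congr rfl hrest, Finset.sum_ite, Finset.sum_const, Finset.sum_const,
      card_sq0 p k hpk, card_ns0 p k hpk]
    simp only [nsmul_eq_mul]
    push_cast
    rw [h2]
    ring
  · -- off-diagonal
    set d := j - i with hdd
    have hd : d ≠ 0 := sub_ne_zero.mpr (Ne.symm hij)
    rw [show (Qmat p (a ^ 2 + b ^ 2 + c ^ 2)
        (a * b + a * c + b * c + (k : R) * (b ^ 2 + c ^ 2))
        (a * b + a * c + b * c + (k : R) * (b ^ 2 + c ^ 2))) i j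
      = a * b + a * c + b * c + (k : R) * (b ^ 2 + c ^ 2) by
        simp only [Qmat, Matrix.of_apply, if_neg hij, ite_self]]
    have hsplit := Finset.sum_sdiff (f := fun t : ZMod p =>
        ((if t = 0 then a else if IsSquare t then b else c)
          * (if t - d = 0 then a else if IsSquare (t - d) then b else c)))
      (Finset.subset_univ ({0, d} : Finset (ZMod p)))
    rw [← hsplit, Finset.sum_pair hd.symm]
    -- boundary terms
    have hb1 : ((if (0 : ZMod p) = 0 then a else if IsSquare (0 : ZMod p) then b else c)
        * (if (0 : ZMod p) - d = 0 then a else if IsSquare ((0 : ZMod p) - d) then b else c))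
        = a * (if IsSquare (-d) then b else c) := by
      rw [if_pos rfl, zero_sub, if_neg (neg_ne_zero.mpr hd)]
    have hb2 : ((if (d : ZMod p) = 0 then a else if IsSquare (d : ZMod p) then b else c)
        * (if (d : ZMod p) - d = 0 then a else if IsSquare ((d : ZMod p) - d) then b else c))
        = (if IsSquare d then b else c) * a := by
      rw [if_neg hd, sub_self, if_pos rfl]
    rw [hb1, hb2]
    have hbd : (if IsSquare (-d) then a * b else a * c) + (if IsSquare d then b * a else c * a)
        = a * b + a * c := by
      by_cases h : IsSquare d
      · rw [if_pos h, if_neg ((sq_neg_iff p k hpk hd).not.mpr (not_not.mpr h))]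
        ring
      · rw [if_pos ((sq_neg_iff p k hpk hd).mpr h), if_neg h]
        ring
    -- main sum
    have hrest : ∀ t ∈ (Finset.univ \ {0, d} : Finset (ZMod p)),
        ((if t = 0 then a else if IsSquare t then b else c)
          * (if t - d = 0 then a else if IsSquare (t - d) then b else c))
        = (if IsSquare t then b else c) * (if IsSquare (t - d) then b else c) := by
      intro t ht
      simp only [Finset.mem_sdiff, Finset.mem_insert, Finset.mem_singleton] at ht
      have ht0 : t ≠ 0 := fun h => ht.2 (Or.inl h)
      have htd : t - d ≠ 0 := fun h => ht.2 (Or.inr (by rwa [sub_eq_zero] at h))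
      rw [if_neg ht0, if_neg htd]
    rw [Finset.sum_congr rfl hrest]
    simp only [ite_mul, mul_ite]
    rw [Finset.sum_ite, Finset.sum_ite, Finset.sum_ite, Finset.sum_const, Finset.sum_const,
      Finset.sum_const, Finset.sum_const]
    rw [card_N1 p k hpk hd, card_N4 p k hpk hd]
    have h23 := card_N23 p k hpk hd
    simp only [nsmul_eq_mul]
    rw [show ((((Finset.univ \ {0, d} : Finset (ZMod p)).filter (fun t => ¬ IsSquare (t - d))).filter
      (fun t => IsSquare t)).card : R)
      = ((2 * k + 1 : ℕ) : R)
        - ((((Finset.univ \ {0, d} : Finset (ZMod p)).filter (fun t => IsSquare (t - d))).filter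
          (fun t => ¬ IsSquare t)).card : R) by
        rw [← h23]; push_cast; ring]
    push_cast
    rw [h2, hbd]
    ring

end Mat

lemma Qmat_sum {R : Type*} [CommRing R] (p : ℕ) {ι : Type*} [Fintype ι] (A B C : ι → R) :
    ∑ i : ι, Qmat p (A i) (B i) (C i) = Qmat p (∑ i, A i) (∑ i, B i) (∑ i, C i) := by
  ext i j
  rw [Matrix.sum_apply]
  by_cases h1 : i = j
  · simp [Qmat, h1]
  · by_cases h2 : IsSquare (j - i) <;> simp [Qmat, h1, h2]

theorem stmt17 {R : Type*} [CommRing R] [CharP R 2] (p k : ℕ) [Fact (Nat.Prime p)]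
    (hpk : p = 4 * k + 3) (a b c : ZMod 3 → R) :
    ∑ i : ZMod 3, Qmat p (a i) (b i) (c i) * (Qmat p (a i) (b i) (c i))ᵀ =
      Qmat p (∑ i : ZMod 3, ((a i) ^ 2 + (b i) ^ 2 + (c i) ^ 2))
        (∑ i : ZMod 3, (a i * b i + a i * c i + b i * c i + (k : R) * ((b i) ^ 2 + (c i) ^ 2)))
        (∑ i : ZMod 3, (a i * b i + a i * c i + b i * c i + (k : R) * ((b i) ^ 2 + (c i) ^ 2))) := by
  rw [Finset.sum_congr rfl (fun i _ => Qmul p k hpk (a i) (b i) (c i))]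
  exact Qmat_sum p _ _ _
end
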